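/- Let N ≥ 2 and let φ be an A_N-positive primitive automorphism of the free group F_N. Then for every nonempty pure word u ∈ F_N, the length |φ^k(u)| of the reduced word of φ^k(u) tends to infinity as k → ∞; in particular, for every nonempty pure word u there exists k ≥ 1 such that |φ^k(u)| > |u|. (Growth claim used in the paper, e.g. in the proof of the Proposition that a nonempty word fixed by i_w ∘ φ^k is not pure.) -/

import Mathlib

/-- A word of the free group is pure positive if its reduced word is nonempty
and all its letters are positive. -/
def PurePos {N : ℕ} (v : FreeGroup (Fin N)) : Prop :=
  v.toWord ≠ [] ∧ ∀ l ∈ v.toWord, l.2 = true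

/-- A word of the free group is pure negative if its reduced word is nonempty
and all its letters are negative. -/
def PureNeg {N : ℕ} (v : FreeGroup (Fin N)) : Prop :=
  v.toWord ≠ [] ∧ ∀ l ∈ v.toWord, l.2 = false

/-- An automorphism of the free group is `A_N`-positive if the image of each
generator is pure positive. -/
def IsPositive {N : ℕ} (φ : MulAut (FreeGroup (Fin N))) : Prop :=
  ∀ a : Fin N, PurePos (φ (FreeGroup.of a))

/-- An `A_N`-positive automorphism is primitive if some power sends each generator
to a word containing every positive letter. -/
def IsPrimitive {N : ℕ} (φ : MulAut (FreeGroup (Fin N))) : Prop :=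
  ∃ k : ℕ, 1 ≤ k ∧ ∀ a b : Fin N, (b, true) ∈ ((φ ^ k) (FreeGroup.of a)).toWord

lemma reduce_pos {N : ℕ} (L : List ((Fin N) × Bool)) (h : ∀ l ∈ L, l.2 = true) :
    FreeGroup.reduce L = L := by
  induction L with
  | nil => simp
  | cons x xs ih =>
    have hx : x.2 = true := h x (List.mem_cons_self ..)
    have ih' := ih (fun l hl => h l (List.mem_cons_of_mem _ hl))
    rw [FreeGroup.reduce.cons, ih']
    cases xs with
    | nil => rfl
    | cons y ys =>
      have hy : y.2 = true := h y (by simp)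
      simp [hx, hy]

lemma toWord_mk_pos {N : ℕ} (L : List ((Fin N) × Bool)) (h : ∀ l ∈ L, l.2 = true) :
    (FreeGroup.mk L).toWord = L := by
  rw [FreeGroup.toWord_mk, reduce_pos L h]

lemma mul_toWord_pos {N : ℕ} (v w : FreeGroup (Fin N))
    (hv : ∀ l ∈ v.toWord, l.2 = true) (hw : ∀ l ∈ w.toWord, l.2 = true) :
    (v * w).toWord = v.toWord ++ w.toWord := by
  have : v * w = FreeGroup.mk (v.toWord ++ w.toWord) := by
    rw [← FreeGroup.mul_mk, FreeGroup.mk_toWord, FreeGroup.mk_toWord]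
  rw [this, toWord_mk_pos]
  intro l hl
  rcases List.mem_append.1 hl with h | h
  · exact hv l h
  · exact hw l h

lemma list_lemma {N : ℕ} (ψ : MulAut (FreeGroup (Fin N))) (hψ : IsPositive ψ) :
    ∀ L : List ((Fin N) × Bool), L ≠ [] → (∀ l ∈ L, l.2 = true) →
      PurePos (ψ (FreeGroup.mk L)) ∧
        (ψ (FreeGroup.mk L)).toWord.length
          = (L.map fun l => (ψ (FreeGroup.of l.1)).toWord.length).sum := by
  intro L
  induction L with
  | nil => intro h; exact absurd rfl h
  | cons x xs ih =>
    intro _ hpos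
    have hx : x.2 = true := hpos x (List.mem_cons_self ..)
    have hxeq : FreeGroup.mk [x] = FreeGroup.of x.1 := by
      have : x = (x.1, true) := by rw [← hx]
      rw [this]; rfl
    cases xs with
    | nil =>
      rw [show ([x] : List ((Fin N) × Bool)) = [x] from rfl]
      constructor
      · rw [hxeq]; exact hψ x.1
      · simp [hxeq]
    | cons y ys =>
      have hxs : (y :: ys : List ((Fin N) × Bool)) ≠ [] := by simp
      have hposxs : ∀ l ∈ (y :: ys), l.2 = true :=
        fun l hl => hpos l (List.mem_cons_of_mem _ hl)
      obtain ⟨⟨hne, hpp⟩, hlen⟩ := ih hxs hposxs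
      have hsplit : FreeGroup.mk (x :: y :: ys) = FreeGroup.of x.1 * FreeGroup.mk (y :: ys) := by
        rw [← hxeq, FreeGroup.mul_mk]; rfl
      have h1 := hψ x.1
      have hmul : (ψ (FreeGroup.mk (x :: y :: ys))).toWord
          = (ψ (FreeGroup.of x.1)).toWord ++ (ψ (FreeGroup.mk (y :: ys))).toWord := by
        rw [hsplit, map_mul]
        exact mul_toWord_pos _ _ h1.2 hpp
      refine ⟨⟨?_, ?_⟩, ?_⟩
      · rw [hmul]; simp [h1.1]
      · rw [hmul]; intro l hl
        rcases List.mem_append.1 hl with h | h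
        · exact h1.2 l h
        · exact hpp l h
      · rw [hmul, List.length_append, hlen]; simp

lemma apply_pure {N : ℕ} (ψ : MulAut (FreeGroup (Fin N))) (hψ : IsPositive ψ)
    (u : FreeGroup (Fin N)) (hu : PurePos u) :
    PurePos (ψ u) ∧ (ψ u).toWord.length
      = (u.toWord.map fun l => (ψ (FreeGroup.of l.1)).toWord.length).sum := by
  have := list_lemma ψ hψ u.toWord hu.1 hu.2
  rwa [FreeGroup.mk_toWord] at this

lemma apply_ge {N : ℕ} (ψ : MulAut (FreeGroup (Fin N))) (hψ : IsPositive ψ)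
    (c : ℕ) (hc : ∀ a : Fin N, c ≤ (ψ (FreeGroup.of a)).toWord.length)
    (u : FreeGroup (Fin N)) (hu : PurePos u) :
    c * u.toWord.length ≤ (ψ u).toWord.length := by
  rw [(apply_pure ψ hψ u hu).2]
  calc c * u.toWord.length = (u.toWord.map fun _ => c).sum := by
        simp [List.map_const', List.sum_replicate, smul_eq_mul, Nat.mul_comm]
      _ ≤ _ := List.sum_le_sum (fun l _ => hc l.1)

lemma pow_positive {N : ℕ} (φ : MulAut (FreeGroup (Fin N))) (hpos : IsPositive φ) :
    ∀ k : ℕ, IsPositive (φ ^ k) := by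
  intro k
  induction k with
  | zero =>
    intro a
    simp only [pow_zero]
    constructor <;> simp [FreeGroup.toWord_of]
  | succ n ih =>
    intro a
    have : (φ ^ (n + 1)) (FreeGroup.of a) = (φ ^ n) (φ (FreeGroup.of a)) := by
      rw [pow_succ]; rfl
    rw [this]
    exact (apply_pure (φ ^ n) ih _ (hpos a)).1

lemma two_le_of_prim {N : ℕ} (hN : 2 ≤ N) {ψ : MulAut (FreeGroup (Fin N))}
    (h : ∀ a b : Fin N, (b, true) ∈ (ψ (FreeGroup.of a)).toWord) (a : Fin N) :
    2 ≤ (ψ (FreeGroup.of a)).toWord.length := by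
  have h0 : ((⟨0, by omega⟩ : Fin N), true) ∈ (ψ (FreeGroup.of a)).toWord := h a _
  have h1 : ((⟨1, by omega⟩ : Fin N), true) ∈ (ψ (FreeGroup.of a)).toWord := h a _
  have hne : ((⟨0, by omega⟩ : Fin N), true) ≠ ((⟨1, by omega⟩ : Fin N), true) := by
    simp [Fin.ext_iff]
  rcases List.mem_iff_get.1 h0 with ⟨i, hi⟩
  rcases List.mem_iff_get.1 h1 with ⟨j, hj⟩
  have hij : i ≠ j := by
    intro hh; apply hne; rw [← hi, ← hj, hh]
  have := i.2; have := j.2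
  omega

theorem main_pos {N : ℕ} (hN : 2 ≤ N)
    (φ : MulAut (FreeGroup (Fin N))) (hpos : IsPositive φ) (hprim : IsPrimitive φ)
    (u : FreeGroup (Fin N)) (hu : PurePos u) :
    Filter.Tendsto (fun k : ℕ => ((φ ^ k) u).toWord.length) Filter.atTop Filter.atTop ∧
      ∃ k : ℕ, 1 ≤ k ∧ u.toWord.length < ((φ ^ k) u).toWord.length := by
  obtain ⟨k0, hk0, hk0prim⟩ := hprim
  set f : ℕ → ℕ := fun k => ((φ ^ k) u).toWord.length with hf
  have hpure : ∀ k, PurePos ((φ ^ k) u) := fun k =>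
    (apply_pure (φ ^ k) (pow_positive φ hpos k) u hu).1
  have hone : ∀ a : Fin N, 1 ≤ (φ (FreeGroup.of a)).toWord.length := by
    intro a
    have := (hpos a).1
    exact Nat.one_le_iff_ne_zero.2 (by simpa [List.length_eq_zero_iff] using this)
  have hmono : Monotone f := by
    apply monotone_nat_of_le_succ
    intro k
    have heq : (φ ^ (k + 1)) u = φ ((φ ^ k) u) := by rw [pow_succ']; rfl
    have := apply_ge φ hpos 1 hone ((φ ^ k) u) (hpure k)
    simpa [hf, heq] using this
  have hstep : ∀ k, 2 * f k ≤ f (k + k0) := by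
    intro k
    have heq : (φ ^ (k + k0)) u = (φ ^ k0) ((φ ^ k) u) := by
      rw [add_comm, pow_add]; rfl
    have h2 := apply_ge (φ ^ k0) (pow_positive φ hpos k0) 2
      (two_le_of_prim hN hk0prim) ((φ ^ k) u) (hpure k)
    simpa [hf, heq] using h2
  have hf0 : 1 ≤ f 0 := by
    simp only [hf, pow_zero]
    exact Nat.one_le_iff_ne_zero.2 (by simpa [List.length_eq_zero_iff] using hu.1)
  have hgrow : ∀ m : ℕ, 2 ^ m ≤ f (m * k0) := by
    intro m
    induction m with
    | zero => simpa using hf0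
    | succ n ih =>
      have : 2 ^ (n + 1) ≤ 2 * f (n * k0) := by
        rw [pow_succ, mul_comm 2]
        exact Nat.mul_le_mul_right 2 ih
      calc 2 ^ (n + 1) ≤ 2 * f (n * k0) := this
        _ ≤ f (n * k0 + k0) := hstep _
        _ = f ((n + 1) * k0) := by ring_nf
  constructor
  · apply Filter.tendsto_atTop_atTop.2
    intro b
    refine ⟨b * k0, fun a ha => ?_⟩
    calc b ≤ 2 ^ b := Nat.le_of_lt (Nat.lt_two_pow_self)
      _ ≤ f (b * k0) := hgrow b
      _ ≤ f a := hmono ha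
  · refine ⟨k0, hk0, ?_⟩
    have h2 : 2 * f 0 ≤ f (0 + k0) := hstep 0
    rw [Nat.zero_add] at h2
    have hf0eq : f 0 = u.toWord.length := by simp [hf]
    have hlt : u.toWord.length < f k0 := by omega
    simpa [hf] using hlt

lemma pureNeg_inv {N : ℕ} (u : FreeGroup (Fin N)) (h : PureNeg u) : PurePos u⁻¹ := by
  constructor
  · rw [FreeGroup.toWord_inv]
    intro hc
    have := congrArg List.length hc
    rw [FreeGroup.invRev_length] at this
    exact h.1 (List.length_eq_zero_iff.1 this)
  · rw [FreeGroup.toWord_inv]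
    intro l hl
    unfold FreeGroup.invRev at hl
    rw [List.mem_reverse, List.mem_map] at hl
    obtain ⟨g, hg, hgl⟩ := hl
    have := h.2 g hg
    rw [← hgl]; simp [this]

/-- For a nonempty pure word `u`, the lengths `|φ^k(u)|` tend to infinity with `k`;
in particular some `k ≥ 1` satisfies `|φ^k(u)| > |u|`. -/
theorem length_apply_pow_tendsto_atTop {N : ℕ} (hN : 2 ≤ N)
    (φ : MulAut (FreeGroup (Fin N))) (hpos : IsPositive φ) (hprim : IsPrimitive φ)
    (u : FreeGroup (Fin N)) (hu : PurePos u ∨ PureNeg u) :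
    Filter.Tendsto (fun k : ℕ => ((φ ^ k) u).toWord.length) Filter.atTop Filter.atTop ∧
      ∃ k : ℕ, 1 ≤ k ∧ u.toWord.length < ((φ ^ k) u).toWord.length := by
  rcases hu with hu | hu
  · exact main_pos hN φ hpos hprim u hu
  · have hpp : PurePos u⁻¹ := pureNeg_inv u hu
    have hlen : ∀ k : ℕ, ((φ ^ k) u).toWord.length = ((φ ^ k) u⁻¹).toWord.length := by
      intro k
      rw [map_inv, FreeGroup.toWord_inv, FreeGroup.invRev_length]
    have hulen : u.toWord.length = u⁻¹.toWord.length := by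
      rw [FreeGroup.toWord_inv, FreeGroup.invRev_length]
    obtain ⟨h1, k, hk, hk2⟩ := main_pos hN φ hpos hprim u⁻¹ hpp
    constructor
    · have hfun : (fun k : ℕ => ((φ ^ k) u).toWord.length)
          = fun k : ℕ => ((φ ^ k) u⁻¹).toWord.length := funext hlen
      rw [hfun]; exact h1
    · exact ⟨k, hk, by rw [hlen k, hulen]; exact hk2⟩
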